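/- For any P-forest F, the principal order ideals Λ_1^F, Λ_2^F, …, Λ_n^F form a maximum independent set of the graph G_P. -/

import Mathlib

attribute [local instance] Classical.propDecidable

noncomputable section

open Finset

variable {n : ℕ}

/-- The comparability graph of the poset structure `P` on `Fin n`; for an order
ideal of `P`, connectivity of its induced subgraph in this graph agrees with
connectivity of the Hasse diagram. -/
def compGraph (P : PartialOrder (Fin n)) : SimpleGraph (Fin n) where
  Adj i j := i ≠ j ∧ (P.le i j ∨ P.le j i)
  symm := by
    refine ⟨?_⟩
    intro i j h
    exact ⟨h.1.symm, h.2.symm⟩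
  loopless := by
    refine ⟨?_⟩
    intro i h
    exact h.1 rfl

/-- `J` is an order ideal of the poset `P`. -/
def IsIdeal (P : PartialOrder (Fin n)) (J : Finset (Fin n)) : Prop :=
  ∀ i ∈ J, ∀ j : Fin n, P.le j i → j ∈ J

/-- The Hasse diagram of `J` as a subposet of `P` is a connected graph. -/
def JConn (P : PartialOrder (Fin n)) (J : Finset (Fin n)) : Prop :=
  ((compGraph P).induce (↑J : Set (Fin n))).Connected

/-- `J` is a connected order ideal of `P`. -/
def IsConnIdeal (P : PartialOrder (Fin n)) (J : Finset (Fin n)) : Prop :=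
  IsIdeal P J ∧ JConn P J

/-- The type of connected order ideals of `P` (the vertices of `G_P`). -/
abbrev ConnIdeal (P : PartialOrder (Fin n)) : Type :=
  {J : Finset (Fin n) // IsConnIdeal P J}

instance (P : PartialOrder (Fin n)) : Fintype (ConnIdeal P) := Fintype.ofFinite _

/-- `A` and `B` intersect nontrivially. -/
def Nontriv (A B : Finset (Fin n)) : Prop :=
  (A ∩ B).Nonempty ∧ ¬ A ⊆ B ∧ ¬ B ⊆ A

/-- The graph `G_P` on the connected order ideals of `P`, with two ideals
adjacent iff they intersect nontrivially. -/
def GP (P : PartialOrder (Fin n)) : SimpleGraph (ConnIdeal P) where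
  Adj A B := Nontriv A.1 B.1
  symm := by
    refine ⟨?_⟩
    intro A B h
    exact ⟨by rw [Finset.inter_comm]; exact h.1, h.2.2, h.2.1⟩
  loopless := by
    refine ⟨?_⟩
    intro A h
    exact h.2.1 (Finset.Subset.refl _)

instance (P : PartialOrder (Fin n)) : Fintype ((GP P).ConnectedComponent) :=
  Fintype.ofFinite _

instance (P : PartialOrder (Fin n)) : Fintype ((GP P).edgeSet) :=
  Fintype.ofFinite _

/-- `s` is an independent set of the graph `G`. -/
def IsIndep {V : Type*} (G : SimpleGraph V) (s : Finset V) : Prop :=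
  ∀ a ∈ s, ∀ b ∈ s, ¬ G.Adj a b

/-- `s` is a maximum independent set of the graph `G`. -/
def IsMaxIndep {V : Type*} (G : SimpleGraph V) (s : Finset V) : Prop :=
  IsIndep G s ∧ ∀ t : Finset V, IsIndep G t → t.card ≤ s.card

/-- `s` is a maximum independent set of the subgraph of `G` induced on the
vertex set `S` (e.g. on a connected component of `G`). -/
def IsMaxIndepOn {V : Type*} (G : SimpleGraph V) (S : Set V) (s : Finset V) : Prop :=
  ↑s ⊆ S ∧ IsIndep G s ∧ ∀ t : Finset V, ↑t ⊆ S → IsIndep G t → t.card ≤ s.card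

/-- `μ(M, J) = ⋃_{J' ∈ M, J' ⊊ J} J'`. -/
def mu (P : PartialOrder (Fin n)) (M : Finset (ConnIdeal P)) (J : Finset (Fin n)) :
    Finset (Fin n) :=
  (M.filter (fun J' => J'.1 ⊂ J)).biUnion (fun J' => J'.1)

/-- The strict order relation of the poset `F_M` associated with a maximum
independent set `M` of `G_P`: `i <_{F_M} j` iff `J_a ⊊ J_b` where `J_a, J_b ∈ M`
satisfy `J_a \ μ(M,J_a) = {i}` and `J_b \ μ(M,J_b) = {j}`. -/
def FMlt (P : PartialOrder (Fin n)) (M : Finset (ConnIdeal P)) (i j : Fin n) : Prop :=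
  ∃ Ja ∈ M, ∃ Jb ∈ M,
    Ja.1 \ mu P M Ja.1 = {i} ∧ Jb.1 \ mu P M Jb.1 = {j} ∧ Ja.1 ⊂ Jb.1

/-- The order relation of the poset `F_M`. -/
def FMle (P : PartialOrder (Fin n)) (M : Finset (ConnIdeal P)) (i j : Fin n) : Prop :=
  i = j ∨ FMlt P M i j

/-- Strict relation associated with the relation `le`. -/
def ltRel (le : Fin n → Fin n → Prop) (i j : Fin n) : Prop := le i j ∧ i ≠ j

/-- `j` covers `i` in the order given by the relation `le`. -/
def CovRel (le : Fin n → Fin n → Prop) (i j : Fin n) : Prop :=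
  ltRel le i j ∧ ∀ k : Fin n, ltRel le i k → ¬ ltRel le k j

/-- The principal order ideal `Λ_i = {j : j ≤ i}` of the order given by `le`. -/
def LamRel (le : Fin n → Fin n → Prop) (i : Fin n) : Finset (Fin n) :=
  Finset.univ.filter (fun j => le j i)

/-- The descent set of a forest order given by the relation `le`:
elements `i` whose parent (the element covering `i`) is smaller than `i`. -/
def DesRel (le : Fin n → Fin n → Prop) : Finset (Fin n) :=
  Finset.univ.filter (fun i => ∃ j : Fin n, CovRel le i j ∧ j < i)

/-- `Des(M) = Des(F_M)`. -/
def DesM (P : PartialOrder (Fin n)) (M : Finset (ConnIdeal P)) : Finset (Fin n) :=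
  DesRel (FMle P M)

/-- `Des(M_r, M)`. -/
def DesMr (P : PartialOrder (Fin n)) (Mr M : Finset (ConnIdeal P)) : Finset (Fin n) :=
  (DesM P M).filter (fun i => ∃ J ∈ Mr, J.1 \ mu P M J.1 = {i})

/-- `Des̄(M_r, M)`. -/
def DesBarMr (P : PartialOrder (Fin n)) (Mr M : Finset (ConnIdeal P)) :
    Finset (ConnIdeal P) :=
  Mr.filter (fun J => ∃ i ∈ DesMr P Mr M, J.1 \ mu P M J.1 = {i})

/-- The relation `le` is (the order relation of) a `P`-forest: a partial order
whose Hasse diagram is a forest, all of whose principal order ideals are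
connected order ideals of `P`, and such that for incomparable `i, j` the union
`Λ_i ∪ Λ_j` is a disconnected order ideal of `P`. -/
structure IsPForestRel (P : PartialOrder (Fin n)) (le : Fin n → Fin n → Prop) : Prop where
  refl : ∀ i, le i i
  trans : ∀ i j k, le i j → le j k → le i k
  antisymm : ∀ i j, le i j → le j i → i = j
  forest : ∀ i j k, CovRel le i j → CovRel le i k → j = k
  connIdeal : ∀ i, IsConnIdeal P (LamRel le i)
  disc : ∀ i j : Fin n, ¬ le i j → ¬ le j i →
    IsIdeal P (LamRel le i ∪ LamRel le j) ∧ ¬ JConn P (LamRel le i ∪ LamRel le j)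

/-- The principal order ideal `Λ_i^P` of `P`. -/
def PIdeal (P : PartialOrder (Fin n)) (i : Fin n) : Finset (Fin n) :=
  Finset.univ.filter (fun k => P.le k i)

/-- The generating set `gs(J)`: the maximal elements of `J` with respect to `P`. -/
def gsJ (P : PartialOrder (Fin n)) (J : Finset (Fin n)) : Finset (Fin n) :=
  J.filter (fun i => ∀ j ∈ J, ¬ P.lt i j)

/-- `P` is naturally labeled. -/
def NatLabeled (P : PartialOrder (Fin n)) : Prop :=
  ∀ i j : Fin n, P.lt i j → i < j

/-- `U_max(M, J)`: the maximal members of `U(M,J) = {J' ∈ M : J' ⊊ J}`. -/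
def Umax (P : PartialOrder (Fin n)) (M : Finset (ConnIdeal P)) (J : Finset (Fin n)) :
    Finset (ConnIdeal P) :=
  (M.filter (fun Ja => Ja.1 ⊂ J)).filter
    (fun Ja => ∀ Jb ∈ M, Jb.1 ⊂ J → Jb ≠ Ja → ¬ Ja.1 ⊂ Jb.1)

/-- The set of vertices of `G_P` which are principal order ideals of `P`. -/
def PIdealSet (P : PartialOrder (Fin n)) : Set (ConnIdeal P) :=
  {A : ConnIdeal P | ∃ i : Fin n, A.1 = PIdeal P i}

/-- The graph `H_P`: the subgraph of `G_P` induced by the principal order ideals. -/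
def HP (P : PartialOrder (Fin n)) : SimpleGraph (PIdealSet P) :=
  (GP P).induce (PIdealSet P)

/-- `f` is a `P`-partition. -/
def IsPPartition (P : PartialOrder (Fin n)) (f : Fin n → ℕ) : Prop :=
  (∀ i j : Fin n, P.lt i j → f j ≤ f i) ∧
  (∀ i j : Fin n, P.lt i j → j < i → f j < f i)

/-- The monomial `∏_{k ∈ J} x_k`. -/
def xJ (J : Finset (Fin n)) : MvPowerSeries (Fin n) ℚ :=
  ∏ k ∈ J, MvPowerSeries.X k

/-- The set of linear extensions of `P`, viewed as permutations `w` of `Fin n`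
(in positions `0, …, n-1`) such that `i < j` whenever `w i <_P w j`. -/
def LinExts (P : PartialOrder (Fin n)) : Finset (Equiv.Perm (Fin n)) :=
  Finset.univ.filter (fun w => ∀ i j : Fin n, P.lt (w i) (w j) → i < j)

/-- The major index of a permutation (with 1-indexed positions). -/
def maj (w : Equiv.Perm (Fin n)) : ℕ :=
  ∑ i ∈ Finset.univ.filter
      (fun i : Fin n => ∃ h : (i : ℕ) + 1 < n, w ⟨(i : ℕ) + 1, h⟩ < w i),
    ((i : ℕ) + 1)

/-- The finset of maximum independent sets of the connected component `c` of `G_P`. -/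
def MaxIndepsOn (P : PartialOrder (Fin n)) (c : (GP P).ConnectedComponent) :
    Finset (Finset (ConnIdeal P)) :=
  Finset.univ.filter (fun Mr : Finset (ConnIdeal P) => IsMaxIndepOn (GP P) c.supp Mr)

/-- Adjacency-closed predicates are preserved by reachability. -/
lemma reach_pred' {V : Type*} {G : SimpleGraph V} {p : V → Prop}
    (hp : ∀ a b, G.Adj a b → p a → p b) {a b : V} (h : G.Reachable a b) (ha : p a) : p b := by
  obtain ⟨w⟩ := h
  induction w with
  | nil => exact ha
  | cons hadj w ih => exact ih (hp _ _ hadj ha)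

/-- Two connected subsets sharing a common point have connected union. -/
lemma union_conn' (P : PartialOrder (Fin n)) {A B : Finset (Fin n)}
    (hA : JConn P A) (hB : JConn P B) {x : Fin n} (hxA : x ∈ A) (hxB : x ∈ B) :
    JConn P (A ∪ B) := by
  have hsA : (↑A : Set (Fin n)) ⊆ ↑(A ∪ B) := by
    intro v hv; simp only [Finset.coe_union, Set.mem_union]; exact Or.inl hv
  have hsB : (↑B : Set (Fin n)) ⊆ ↑(A ∪ B) := by
    intro v hv; simp only [Finset.coe_union, Set.mem_union]; exact Or.inr hv
  have hx : x ∈ (↑(A ∪ B) : Set (Fin n)) := hsA hxA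
  have key : ∀ v : (↑(A ∪ B) : Set (Fin n)),
      ((compGraph P).induce ↑(A ∪ B)).Reachable v ⟨x, hx⟩ := by
    rintro ⟨v, hv⟩
    have hv' : v ∈ A ∪ B := by simpa using hv
    rcases Finset.mem_union.1 hv' with hvA | hvB
    · exact (hA.preconnected ⟨v, hvA⟩ ⟨x, hxA⟩).map
        (SimpleGraph.induceHomOfLE (compGraph P) hsA).toHom
    · exact (hB.preconnected ⟨v, hvB⟩ ⟨x, hxB⟩).map
        (SimpleGraph.induceHomOfLE (compGraph P) hsB).toHom
  rw [JConn, SimpleGraph.connected_iff]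
  exact ⟨fun u v => (key u).trans (key v).symm, ⟨⟨x, hx⟩⟩⟩

/-- A union of two nonempty parts with no edges across is disconnected. -/
lemma disconn' (P : PartialOrder (Fin n)) {A B : Finset (Fin n)}
    (hA : A.Nonempty) (hB : B.Nonempty) (hd : ∀ a ∈ A, a ∉ B)
    (hcross : ∀ a ∈ A, ∀ b ∈ B, ¬ (compGraph P).Adj a b) :
    ¬ JConn P (A ∪ B) := by
  intro hc
  obtain ⟨a, ha⟩ := hA
  obtain ⟨b, hb⟩ := hB
  have haU : a ∈ (↑(A ∪ B) : Set (Fin n)) := by simp [ha]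
  have hbU : b ∈ (↑(A ∪ B) : Set (Fin n)) := by simp [hb]
  have hr := hc.preconnected ⟨a, haU⟩ ⟨b, hbU⟩
  have hbA : b ∈ A := by
    refine reach_pred' (p := fun v : (↑(A ∪ B) : Set (Fin n)) => v.1 ∈ A) ?_ hr ha
    rintro ⟨u, hu⟩ ⟨v, hv⟩ hadj huA
    have hvU : v ∈ A ∪ B := by simpa using hv
    rcases Finset.mem_union.1 hvU with h' | h'
    · exact h'
    · exact absurd hadj (hcross u huA v h')
  exact hd b hbA hb

/-- Each member of an independent set of `G_P` has a point not covered by its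
proper subsets in the independent set. -/
lemma rep_nonempty' (P : PartialOrder (Fin n)) (t : Finset (ConnIdeal P))
    (hind : IsIndep (GP P) t) {J : ConnIdeal P} (hJ : J ∈ t) :
    (J.1 \ (t.filter (fun J' => J'.1 ⊂ J.1)).biUnion (fun J' => J'.1)).Nonempty := by
  by_contra hne
  rw [Finset.not_nonempty_iff_eq_empty, Finset.sdiff_eq_empty_iff_subset] at hne
  have hJne : J.1.Nonempty := by
    obtain ⟨⟨x, hx⟩⟩ := J.2.2.nonempty
    exact ⟨x, by simpa using hx⟩
  have hSne : ((t.filter (fun J' => J'.1 ⊂ J.1)).image (fun J' => J'.1)).Nonempty := by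
    obtain ⟨x, hx⟩ := hJne
    obtain ⟨J', hJ', hxJ'⟩ := Finset.mem_biUnion.1 (hne hx)
    exact ⟨J'.1, Finset.mem_image_of_mem _ hJ'⟩
  obtain ⟨J0f, hJ0f, hmax⟩ : ∃ m ∈ (t.filter (fun J' => J'.1 ⊂ J.1)).image (fun J' => J'.1),
      ∀ x ∈ (t.filter (fun J' => J'.1 ⊂ J.1)).image (fun J' => J'.1), ¬ m < x := by
    obtain ⟨m, hm⟩ := Finset.exists_maximal hSne
    exact ⟨m, hm.1, fun x hx hlt => lt_irrefl _ (lt_of_lt_of_le hlt (hm.2 hx hlt.le))⟩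
  obtain ⟨J0, hJ0mem, hJ0eq⟩ := Finset.mem_image.1 hJ0f
  have hJ0t : J0 ∈ t := (Finset.mem_filter.1 hJ0mem).1
  have hJ0ss : J0.1 ⊂ J.1 := (Finset.mem_filter.1 hJ0mem).2
  have hBne : (J.1 \ J0.1).Nonempty := by
    obtain ⟨x, hx1, hx2⟩ := Finset.exists_of_ssubset hJ0ss
    exact ⟨x, Finset.mem_sdiff.2 ⟨hx1, hx2⟩⟩
  have hAne : J0.1.Nonempty := by
    obtain ⟨⟨x, hx⟩⟩ := J0.2.2.nonempty
    exact ⟨x, by simpa using hx⟩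
  have hcross : ∀ a ∈ J0.1, ∀ b ∈ J.1 \ J0.1, ¬ (compGraph P).Adj a b := by
    intro a ha b hb hadj
    obtain ⟨hbJ, hbJ0⟩ := Finset.mem_sdiff.1 hb
    rcases hadj.2 with hle | hle
    · obtain ⟨J', hJ't, hbJ'⟩ := Finset.mem_biUnion.1 (hne hbJ)
      have hJ't' : J' ∈ t := (Finset.mem_filter.1 hJ't).1
      have haJ' : a ∈ J'.1 := J'.2.1 b hbJ' a hle
      have hns : ¬ J'.1 ⊆ J0.1 := fun hsub => hbJ0 (hsub hbJ')
      have hns2 : ¬ J0.1 ⊆ J'.1 := by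
        intro hsub
        have hneq : J0.1 ≠ J'.1 := fun he => hns (he ▸ Finset.Subset.refl _)
        have hlt : J0.1 < J'.1 := lt_of_le_of_ne hsub hneq
        have := hmax J'.1 (Finset.mem_image_of_mem _ hJ't)
        rw [hJ0eq] at hlt
        exact this hlt
      exact hind J' hJ't' J0 hJ0t ⟨⟨a, Finset.mem_inter.2 ⟨haJ', ha⟩⟩, hns, hns2⟩
    · exact hbJ0 (J0.2.1 a ha b hle)
  have hdis := disconn' P hAne hBne
    (fun a ha hb => (Finset.mem_sdiff.1 hb).2 ha) hcross
  rw [Finset.union_sdiff_of_subset hJ0ss.subset] at hdis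
  exact hdis J.2.2

/-- Lemma 2.2: for any `P`-forest `F`, the principal order
ideals `Λ_1^F, …, Λ_n^F` form a maximum independent set of the graph `G_P`. -/
theorem statement_4 (n : ℕ) (P F : PartialOrder (Fin n)) (h : IsPForestRel P F.le) :
    IsMaxIndep (GP P)
      (Finset.univ.image
        (fun i : Fin n => (⟨LamRel F.le i, h.connIdeal i⟩ : ConnIdeal P))) := by
  have hinj : Function.Injective
      (fun i : Fin n => (⟨LamRel F.le i, h.connIdeal i⟩ : ConnIdeal P)) := by
    intro i j hij
    have h1 : LamRel F.le i = LamRel F.le j := congrArg Subtype.val hij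
    have hi : i ∈ LamRel F.le i := Finset.mem_filter.2 ⟨Finset.mem_univ _, h.refl i⟩
    have hj : j ∈ LamRel F.le j := Finset.mem_filter.2 ⟨Finset.mem_univ _, h.refl j⟩
    have hi' : i ∈ LamRel F.le j := h1 ▸ hi
    have hj' : j ∈ LamRel F.le i := h1.symm ▸ hj
    have hij1 : F.le i j := (Finset.mem_filter.1 hi').2
    have hij2 : F.le j i := (Finset.mem_filter.1 hj').2
    exact h.antisymm i j hij1 hij2
  constructor
  · intro a ha b hb hadj
    obtain ⟨i, _, rfl⟩ := Finset.mem_image.1 ha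
    obtain ⟨j, _, rfl⟩ := Finset.mem_image.1 hb
    obtain ⟨hint, hns1, hns2⟩ := hadj
    by_cases hij : F.le i j
    · exact hns1 (fun k hk => Finset.mem_filter.2
        ⟨Finset.mem_univ _, h.trans k i j (Finset.mem_filter.1 hk).2 hij⟩)
    by_cases hji : F.le j i
    · exact hns2 (fun k hk => Finset.mem_filter.2
        ⟨Finset.mem_univ _, h.trans k j i (Finset.mem_filter.1 hk).2 hji⟩)
    obtain ⟨x, hx⟩ := hint
    exact (h.disc i j hij hji).2 (union_conn' P (h.connIdeal i).2 (h.connIdeal j).2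
      (Finset.mem_inter.1 hx).1 (Finset.mem_inter.1 hx).2)
  · intro t ht
    rw [Finset.card_image_of_injective _ hinj, Finset.card_univ, Fintype.card_fin]
    have hrep : ∀ J ∈ t,
        (J.1 \ (t.filter (fun J' => J'.1 ⊂ J.1)).biUnion (fun J' => J'.1)).Nonempty :=
      fun J hJ => rep_nonempty' P t ht hJ
    rcases t.eq_empty_or_nonempty with rfl | ⟨Js, hJs⟩
    · simp
    obtain ⟨x0, _⟩ := hrep _ hJs
    set D : ConnIdeal P → Finset (Fin n) :=
      fun J => J.1 \ (t.filter (fun J' => J'.1 ⊂ J.1)).biUnion (fun J' => J'.1) with hD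
    set g : ConnIdeal P → Fin n :=
      fun J => if hJ : (D J).Nonempty then hJ.choose else x0 with hg
    have hgmem : ∀ J ∈ t, g J ∈ D J := by
      intro J hJ
      have hne := hrep J hJ
      rw [hg]
      have hne' : (D J).Nonempty := hne
      show (if hJ : (D J).Nonempty then hJ.choose else x0) ∈ D J
      rw [dif_pos hne']
      exact hne'.choose_spec
    have hinj2 : (↑t : Set (ConnIdeal P)).InjOn g := by
      intro J1 hJ1' J2 hJ2' heq
      have hJ1 : J1 ∈ t := hJ1'
      have hJ2 : J2 ∈ t := hJ2'
      by_contra hne12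
      have hg1 := Finset.mem_sdiff.1 (hgmem J1 hJ1)
      have hg2 := Finset.mem_sdiff.1 (hgmem J2 hJ2)
      have hadj := ht J1 hJ1 J2 hJ2
      have hint : (J1.1 ∩ J2.1).Nonempty :=
        ⟨g J1, Finset.mem_inter.2 ⟨hg1.1, by rw [heq]; exact hg2.1⟩⟩
      have hsub : J1.1 ⊆ J2.1 ∨ J2.1 ⊆ J1.1 := by
        by_contra hcon
        push_neg at hcon
        exact hadj ⟨hint, hcon.1, hcon.2⟩
      rcases hsub with hs | hs
      · have hss : J1.1 ⊂ J2.1 :=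
          lt_of_le_of_ne hs (fun he => hne12 (Subtype.ext he))
        exact hg2.2 (Finset.mem_biUnion.2
          ⟨J1, Finset.mem_filter.2 ⟨hJ1, hss⟩, by rw [← heq]; exact hg1.1⟩)
      · have hss : J2.1 ⊂ J1.1 :=
          lt_of_le_of_ne hs (fun he => hne12 (Subtype.ext he.symm))
        exact hg1.2 (Finset.mem_biUnion.2
          ⟨J2, Finset.mem_filter.2 ⟨hJ2, hss⟩, by rw [heq]; exact hg2.1⟩)
    have := Finset.card_le_card_of_injOn g (fun a _ => Finset.mem_univ _) hinj2
    simpa using this
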